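/- Fix n ≥ 2. Let (A_{n−1}, B_{n−1}) be an [(n−1)/(n−1)] Padé pair and (A_{n−2}, B_{n−2}) an [(n−2)/(n−2)] Padé pair for the same series, and assume e^{(n−1)}_{2n−1} − c_{2n−1} ≠ 0 and e^{(n−2)}_{2n−3} − c_{2n−3} ≠ 0. Then for every pair of scalars σ_{2n−1}, σ_{2n} ∈ K there exist scalars b*, b** ∈ K, depending K-linearly on (σ_{2n−1}, σ_{2n}) and with b** = σ_{2n−1}/(e^{(n−2)}_{2n−3} − c_{2n−3}), such that the polynomials A* := x·b*·A_{n−1} + x²·b**·A_{n−2} and B* := x·b*·B_{n−1} + x²·b**·B_{n−2} satisfy: the polynomial A* − B*·C_{2n} − σ_{2n−1}·x^{2n−1} − σ_{2n}·x^{2n} has zero coefficients in all degrees 0,…,2n. (This is the remainder-term representation of the paper's Appendix.) -/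

import Mathlib

open Polynomial

/-- The truncation `C_N(x) = ∑_{k=0}^{N} c_k x^k` of the series with coefficients `c`. -/
noncomputable def seriesTrunc {K : Type*} [Field K] (c : ℕ → K) (N : ℕ) : Polynomial K :=
  ∑ k ∈ Finset.range (N + 1), Polynomial.C (c k) * Polynomial.X ^ k

/-- `(A, B)` is an `[n/n]` Padé pair for the series with coefficients `c`. -/
def IsPadePair {K : Type*} [Field K] (c : ℕ → K) (n : ℕ) (A B : Polynomial K) : Prop :=
  A.natDegree ≤ n ∧ B.natDegree ≤ n ∧ A.coeff 0 = 0 ∧ B.coeff 0 = 1 ∧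
    ∀ j ≤ 2 * n, (A - B * seriesTrunc c (2 * n)).coeff j = 0

lemma coeff_mul_C_X_pow {K : Type*} [Field K] (B : Polynomial K) (a : K) (k j : ℕ) :
    (B * (C a * X ^ k)).coeff j = if k ≤ j then a * B.coeff (j - k) else 0 := by
  have h : B * (C a * X ^ k) = (C a * B) * X ^ k := by ring
  rw [h, coeff_mul_X_pow']
  split <;> simp [coeff_C_mul]

lemma trunc_split {K : Type*} [Field K] (c : ℕ → K) (M N : ℕ) (h : M ≤ N) :
    seriesTrunc c N = seriesTrunc c M + ∑ k ∈ Finset.Ico (M+1) (N+1), C (c k) * X ^ k := by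
  unfold seriesTrunc
  rw [Finset.range_eq_Ico,
    ← Finset.sum_Ico_consecutive _ (Nat.zero_le (M+1)) (by omega : M + 1 ≤ N + 1)]
  rw [Finset.range_eq_Ico]

lemma pade_shift {K : Type*} [Field K] (c : ℕ → K) (m N : ℕ) (h : m < N) (A B : Polynomial K)
    (hB : B.coeff 0 = 1)
    (hz : ∀ j ≤ 2*m, (A - B * seriesTrunc c (2*m)).coeff j = 0) :
    (∀ j ≤ 2*m, (A - B * seriesTrunc c (2*N)).coeff j = 0) ∧
    (A - B * seriesTrunc c (2*N)).coeff (2*m+1)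
      = (A - B * seriesTrunc c (2*m)).coeff (2*m+1) - c (2*m+1) := by
  have hsplit := trunc_split c (2*m) (2*N) (by omega)
  have key : ∀ j, (A - B * seriesTrunc c (2*N)).coeff j
      = (A - B * seriesTrunc c (2*m)).coeff j
        - ∑ k ∈ Finset.Ico (2*m+1) (2*N+1), (if k ≤ j then c k * B.coeff (j - k) else 0) := by
    intro j
    rw [hsplit, mul_add, Finset.mul_sum]
    simp [coeff_sub, Polynomial.finset_sum_coeff, coeff_mul_C_X_pow, sub_sub]
  constructor
  · intro j hj
    rw [key j, hz j hj, Finset.sum_eq_zero, sub_zero]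
    intro k hk
    rw [Finset.mem_Ico] at hk
    rw [if_neg (by omega)]
  · rw [key]
    congr 1
    rw [Finset.sum_eq_single (2*m+1)]
    · simp [hB]
    · intro k hk hne
      rw [Finset.mem_Ico] at hk
      rw [if_neg (by omega)]
    · intro hnot
      exact absurd (Finset.mem_Ico.mpr ⟨le_refl _, by omega⟩) hnot

/-- **Remainder-term representation** (the paper's Appendix): any remainder
`σ_{2n-1} x^{2n-1} + σ_{2n} x^{2n}` can be represented via the previous Padé pairs,
with coefficients `b*`, `b**` depending linearly on `(σ_{2n-1}, σ_{2n})`. -/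
theorem remainder_representation {K : Type*} [Field K] [CharZero K]
    (c : ℕ → K) (hc0 : c 0 = 0) (n : ℕ) (hn : 2 ≤ n)
    (A1 B1 A2 B2 : Polynomial K)
    (h1 : IsPadePair c (n - 1) A1 B1)
    (h2 : IsPadePair c (n - 2) A2 B2)
    (hd1 : (A1 - B1 * seriesTrunc c (2 * (n - 1))).coeff (2 * n - 1) - c (2 * n - 1) ≠ 0)
    (hd2 : (A2 - B2 * seriesTrunc c (2 * (n - 2))).coeff (2 * n - 3) - c (2 * n - 3) ≠ 0) :
    ∃ bs bss : (K × K) →ₗ[K] K,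
      ∀ σ₁ σ₂ : K,
        bss (σ₁, σ₂) = σ₁ /
            ((A2 - B2 * seriesTrunc c (2 * (n - 2))).coeff (2 * n - 3) - c (2 * n - 3)) ∧
        ∀ j ≤ 2 * n,
          (Polynomial.X * Polynomial.C (bs (σ₁, σ₂)) * A1
              + Polynomial.X ^ 2 * Polynomial.C (bss (σ₁, σ₂)) * A2
              - (Polynomial.X * Polynomial.C (bs (σ₁, σ₂)) * B1
                  + Polynomial.X ^ 2 * Polynomial.C (bss (σ₁, σ₂)) * B2)
                * seriesTrunc c (2 * n)
              - Polynomial.C σ₁ * Polynomial.X ^ (2 * n - 1)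
              - Polynomial.C σ₂ * Polynomial.X ^ (2 * n)).coeff j = 0 := by
  obtain ⟨m, rfl⟩ : ∃ m, n = m + 2 := ⟨n - 2, by omega⟩
  obtain ⟨hA1d, hB1d, hA10, hB10, hz1⟩ := h1
  obtain ⟨hA2d, hB2d, hA20, hB20, hz2⟩ := h2
  have i1 : m + 2 - 1 = m + 1 := by omega
  have i2 : m + 2 - 2 = m := by omega
  have i3 : 2 * (m + 2) - 1 = 2 * m + 3 := by omega
  have i4 : 2 * (m + 2) - 3 = 2 * m + 1 := by omega
  have i5 : 2 * (m + 2) = 2 * m + 4 := by omega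
  have i7 : 2 * m + 4 - 1 = 2 * m + 3 := by omega
  have i8 : 2 * m + 4 - 3 = 2 * m + 1 := by omega
  simp only [i1, i2, i3, i4, i5, i7, i8] at hz1 hz2 hd1 hd2 ⊢
  have hp1 := pade_shift c (m+1) (m+2) (by omega) A1 B1 hB10 hz1
  have hp2 := pade_shift c m (m+2) (by omega) A2 B2 hB20 hz2
  rw [i5] at hp1 hp2
  set T := seriesTrunc c (2*m+4) with hT
  set Q1 := A1 - B1 * T with hQ1
  set Q2 := A2 - B2 * T with hQ2
  set d1 := (A1 - B1 * seriesTrunc c (2*(m+1))).coeff (2*(m+1)+1) - c (2*(m+1)+1) with hd1def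
  set d2 := (A2 - B2 * seriesTrunc c (2*m)).coeff (2*m+1) - c (2*m+1) with hd2def
  set v := Q2.coeff (2*m+2) with hvdef
  have hd1ne : d1 ≠ 0 := by
    rw [hd1def, show 2*(m+1)+1 = 2*m+3 from by omega, show 2*(m+1) = 2*m+2 from by omega]
    rw [show (2:ℕ)*m+2 = 2*(m+1) from by omega]
    exact hd1
  have hd2ne : d2 ≠ 0 := hd2
  have hc1 : ∀ j, (X * Q1).coeff j = if 1 ≤ j then Q1.coeff (j-1) else 0 := by
    intro j
    rw [show (X : Polynomial K) * Q1 = Q1 * X ^ 1 by ring, coeff_mul_X_pow']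
  have hc2 : ∀ j, (X ^ 2 * Q2).coeff j = if 2 ≤ j then Q2.coeff (j-2) else 0 := by
    intro j
    rw [show (X : Polynomial K) ^ 2 * Q2 = Q2 * X ^ 2 by ring, coeff_mul_X_pow']
  have f1z : ∀ j ≤ 2*m+3, (X * Q1).coeff j = 0 := by
    intro j hj
    rw [hc1]
    split
    · exact hp1.1 (j - 1) (by omega)
    · rfl
  have f1t : (X * Q1).coeff (2*m+4) = d1 := by
    rw [hc1, if_pos (by omega), show 2*m+4-1 = 2*(m+1)+1 from by omega, hQ1, hp1.2]
  have f2z : ∀ j ≤ 2*m+2, (X ^ 2 * Q2).coeff j = 0 := by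
    intro j hj
    rw [hc2]
    split
    · exact hp2.1 (j - 2) (by omega)
    · rfl
  have f2t : (X ^ 2 * Q2).coeff (2*m+3) = d2 := by
    rw [hc2, if_pos (by omega), show 2*m+3-2 = 2*m+1 from by omega, hQ2, hp2.2]
  have f2v : (X ^ 2 * Q2).coeff (2*m+4) = v := by
    rw [hc2, if_pos (by omega), show 2*m+4-2 = 2*m+2 from by omega]
  refine ⟨d1⁻¹ • (LinearMap.snd K K K - (v * d2⁻¹) • LinearMap.fst K K K),
          d2⁻¹ • LinearMap.fst K K K, ?_⟩
  intro σ₁ σ₂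
  have hbss : (d2⁻¹ • LinearMap.fst K K K) (σ₁, σ₂) = σ₁ * d2⁻¹ := by
    simp [smul_eq_mul, mul_comm]
  have hbs : (d1⁻¹ • (LinearMap.snd K K K - (v * d2⁻¹) • LinearMap.fst K K K)) (σ₁, σ₂)
      = d1⁻¹ * (σ₂ - v * d2⁻¹ * σ₁) := by
    simp only [LinearMap.smul_apply, LinearMap.sub_apply, LinearMap.snd_apply,
      LinearMap.fst_apply, smul_eq_mul]
    try ring
  constructor
  · rw [hbss, div_eq_mul_inv]
  · intro j hj
    rw [hbss, hbs]
    have hpoly : X * C (d1⁻¹ * (σ₂ - v * d2⁻¹ * σ₁)) * A1 + X ^ 2 * C (σ₁ * d2⁻¹) * A2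
        - (X * C (d1⁻¹ * (σ₂ - v * d2⁻¹ * σ₁)) * B1 + X ^ 2 * C (σ₁ * d2⁻¹) * B2) * T
        - C σ₁ * X ^ (2*m+3) - C σ₂ * X ^ (2*m+4)
        = C (d1⁻¹ * (σ₂ - v * d2⁻¹ * σ₁)) * (X * Q1) + C (σ₁ * d2⁻¹) * (X ^ 2 * Q2)
          - C σ₁ * X ^ (2*m+3) - C σ₂ * X ^ (2*m+4) := by
      rw [hQ1, hQ2]; ring
    rw [hpoly]
    simp only [coeff_sub, coeff_add, coeff_C_mul, coeff_X_pow]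
    rcases Nat.lt_or_ge j (2*m+3) with hlt | hge
    · rw [f1z j (by omega), f2z j (by omega), if_neg (by omega), if_neg (by omega)]
      ring
    · rcases Nat.eq_or_lt_of_le hge with heq | hgt
      · rw [← heq, f1z _ (le_refl _), f2t, if_pos rfl, if_neg (by omega)]
        field_simp
        ring
      · have hj4 : j = 2*m+4 := by omega
        rw [hj4, f1t, f2v, if_neg (by omega), if_pos rfl]
        field_simp
        ring
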